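/- Fix a sufficiently small ε > 0 and α ∈ (0,1/2) with |α·ln α + (1−α)·ln(1−α)| < ε, and set t₁ = ⌊(ln n)²⌋. Fix a set Y ⊆ [n] of size y ≥ (ln n)^{2+3ε}·√n. For n large enough, the probability that in G(n,1/2) the number of vertices v ∈ [n]∖Y with α·y < |N₀(v,Y)| < (1/2 − (ε/5)·(ln ln n)/(ln n))·y exceeds t₁ is at most e^{−(ε²/50)·y·(ln ln n)²}. -/

import Mathlib

open MeasureTheory Filter Real
open scoped Classical ENNReal

noncomputable section

instance (n : ℕ) : MeasurableSpace (SimpleGraph (Fin n)) := ⊤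

/-- The number of edges of a graph on `Fin n`. -/
noncomputable def edgeCount {n : ℕ} (G : SimpleGraph (Fin n)) : ℕ := Nat.card G.edgeSet

/-- The binomial random graph measure `G(n,p)`: a graph with `e` edges receives
probability `p ^ e * (1 - p) ^ (C(n,2) - e)`. -/
noncomputable def gnp (n : ℕ) (p : ℝ) : Measure (SimpleGraph (Fin n)) :=
  ∑ G : SimpleGraph (Fin n),
    (ENNReal.ofReal (p ^ edgeCount G * (1 - p) ^ (n.choose 2 - edgeCount G))) •
      MeasureTheory.Measure.dirac G

/-- `K` is an inclusion-maximal clique of `G`. -/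
def IsMaxClique {n : ℕ} (G : SimpleGraph (Fin n)) (K : Finset (Fin n)) : Prop :=
  G.IsClique (K : Set (Fin n)) ∧
    ∀ K' : Finset (Fin n), G.IsClique (K' : Set (Fin n)) → K ⊆ K' → K' = K

/-- A clique coloring: no inclusion-maximal clique with at least two vertices is
monochromatic. -/
def IsCliqueColoring {n : ℕ} {α : Type*} (G : SimpleGraph (Fin n)) (c : Fin n → α) : Prop :=
  ∀ K : Finset (Fin n), IsMaxClique G K → 2 ≤ K.card → ¬ ∀ u ∈ K, ∀ w ∈ K, c u = c w

/-- The clique chromatic number. -/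
noncomputable def cliqueChromaticNumber {n : ℕ} (G : SimpleGraph (Fin n)) : ℕ :=
  sInf {s : ℕ | ∃ c : Fin n → Fin s, IsCliqueColoring G c}

/-- `N₀(v, Y)`: the set of non-neighbors of `v` inside `Y`. -/
noncomputable def nonNbrs {n : ℕ} (G : SimpleGraph (Fin n)) (v : Fin n) (Y : Finset (Fin n)) :
    Finset (Fin n) :=
  Y.filter (fun u => u ≠ v ∧ ¬ G.Adj v u)

/-- `N₀(v₁, …, v_j)`: the set of common non-neighbors of `v₁, …, v_j`. -/
noncomputable def commonNonNbrs {n j : ℕ} (G : SimpleGraph (Fin n)) (v : Fin j → Fin n) :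
    Finset (Fin n) :=
  Finset.univ.filter (fun u => ∀ i, u ≠ v i ∧ ¬ G.Adj (v i) u)



/-! ### Auxiliary lemmas -/

section AuxLemmas

open Finset

/-- Bijection between simple graphs and boolean functions on non-diagonal `Sym2`. -/
def graphEquiv (n : ℕ) : SimpleGraph (Fin n) ≃ ({e : Sym2 (Fin n) // ¬ e.IsDiag} → Bool) where
  toFun G e := decide (e.1 ∈ G.edgeSet)
  invFun f := SimpleGraph.fromEdgeSet {e | ∃ h : ¬ e.IsDiag, f ⟨e, h⟩ = true}
  left_inv G := by
    ext v w
    simp only [SimpleGraph.fromEdgeSet_adj, Set.mem_setOf_eq, decide_eq_true_eq,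
      SimpleGraph.mem_edgeSet]
    constructor
    · rintro ⟨⟨h, ha⟩, hne⟩; exact ha
    · intro ha
      exact ⟨⟨by simp [Sym2.isDiag_iff_proj_eq, G.ne_of_adj ha], ha⟩, G.ne_of_adj ha⟩
  right_inv f := by
    funext e
    obtain ⟨e, he⟩ := e
    induction e using Sym2.ind with
    | _ v w =>
      have hvw : v ≠ w := by simpa [Sym2.isDiag_iff_proj_eq] using he
      by_cases hf : f ⟨s(v, w), he⟩ = true
      · simp [SimpleGraph.mem_edgeSet, SimpleGraph.fromEdgeSet_adj, hvw, hf]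
      · simp only [Bool.not_eq_true] at hf
        simp [SimpleGraph.mem_edgeSet, SimpleGraph.fromEdgeSet_adj, hvw, hf]

/-- Counting boolean functions with a constraint depending only on an embedded
set of coordinates. -/
lemma card_restrict' {I κ : Type*} [Fintype I] [Fintype κ] (ι : κ ↪ I)
    (P : (κ → Bool) → Prop) :
    Nat.card {f : I → Bool // P (fun k => f (ι k))}
      = Nat.card {g : κ → Bool // P g} * 2 ^ (Fintype.card I - Fintype.card κ) := by
  have hinj : Function.Injective ι := ι.injective
  have e : {f : I → Bool // P (fun k => f (ι k))}
      ≃ {g : κ → Bool // P g} × ({x : I // x ∉ Set.range ⇑ι} → Bool) :=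
  { toFun := fun f => (⟨fun k => f.1 (ι k), f.2⟩, fun x => f.1 x.1)
    invFun := fun gh => ⟨fun x =>
      if hx : x ∈ Set.range ⇑ι then gh.1.1 ((Equiv.ofInjective ι hinj).symm ⟨x, hx⟩)
      else gh.2 ⟨x, hx⟩, by
        have : (fun k => (if hx : ι k ∈ Set.range ⇑ι then
            gh.1.1 ((Equiv.ofInjective ι hinj).symm ⟨ι k, hx⟩) else gh.2 ⟨ι k, hx⟩)) = gh.1.1 := by
          funext k
          rw [dif_pos (Set.mem_range_self k)]
          exact congrArg gh.1.1 (Equiv.ofInjective_symm_apply hinj k)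
        simpa [this] using gh.1.2⟩
    left_inv := by
      rintro ⟨f, hf⟩
      ext x
      simp only
      by_cases hx : x ∈ Set.range ⇑ι
      · rw [dif_pos hx]
        exact congrArg f (Equiv.apply_ofInjective_symm hinj (⟨x, hx⟩ : Set.range ⇑ι))
      · rw [dif_neg hx]
    right_inv := by
      rintro ⟨⟨g, hg⟩, h⟩
      refine Prod.ext ?_ ?_
      · apply Subtype.ext
        funext k
        simp only
        rw [dif_pos (Set.mem_range_self k), Equiv.ofInjective_symm_apply hinj k]
      · funext x
        simp only
        rw [dif_neg x.2] }
  rw [Nat.card_congr e, Nat.card_prod, Nat.card_fun]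
  congr 1
  have h1 : Nat.card {x : I // x ∈ Set.range ⇑ι} = Fintype.card κ := by
    rw [Nat.card_congr (Equiv.ofInjective ι hinj).symm, Nat.card_eq_fintype_card]
  have h2 : Nat.card {x : I // x ∈ Set.range ⇑ι} + Nat.card {x : I // x ∉ Set.range ⇑ι}
      = Fintype.card I := by
    have hfin : (Set.range ⇑ι).Finite := Set.toFinite _
    have := Set.ncard_add_ncard_compl (Set.range ⇑ι) hfin (Set.toFinite _)
    rw [← Nat.card_coe_set_eq, ← Nat.card_coe_set_eq,
      Nat.card_eq_fintype_card (α := I)] at this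
    convert this using 2
    rfl
  have h3 : Nat.card Bool = 2 := Nat.card_eq_fintype_card.trans rfl
  rw [h3]
  congr 1
  omega

lemma card_filter_coe' {V : Type*} (Y : Finset V) (P : V → Prop) [DecidablePred P] :
    (Finset.univ.filter (fun u : {x // x ∈ Y} => P ↑u)).card = (Y.filter P).card := by
  apply Finset.card_bij (fun (u : {x // x ∈ Y}) _ => (u : V))
  · intro u hu
    simp only [mem_filter, mem_univ, true_and] at hu ⊢
    exact ⟨u.2, hu⟩
  · intro u _ u' _ h
    exact Subtype.ext h
  · intro u hu
    simp only [mem_filter] at hu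
    exact ⟨⟨u, hu.1⟩, by simp [hu.2], rfl⟩

lemma card_cnt_eq {Z : Type*} [Fintype Z] (k : ℕ) :
    (Finset.univ.filter (fun h : Z → Bool =>
      (Finset.univ.filter (fun z => h z = false)).card = k)).card
        ≤ (Fintype.card Z).choose k := by
  have : ((Finset.univ : Finset Z).powersetCard k).card = (Fintype.card Z).choose k := by
    simp [Finset.card_powersetCard]
  rw [← this]
  apply Finset.card_le_card_of_injOn (fun h => Finset.univ.filter (fun z => h z = false))
  · intro h hh
    simp only [mem_coe, mem_filter, mem_univ, true_and] at hh ⊢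
    rw [Finset.mem_powersetCard]
    exact ⟨Finset.subset_univ _, hh⟩
  · intro h _ h' _ hee
    funext z
    have := Finset.ext_iff.mp hee z
    simp only [mem_filter, mem_univ, true_and] at this
    cases hz : h z <;> cases hz' : h' z
    · rfl
    · exact absurd (this.mp hz) (by simp [hz'])
    · exact absurd (this.mpr hz') (by simp [hz])
    · rfl

lemma card_bool_count {Z : Type*} [Fintype Z] (p : ℕ → Prop) [DecidablePred p] :
    (Finset.univ.filter (fun h : Z → Bool =>
        p ((Finset.univ.filter (fun z => h z = false)).card))).card
      ≤ ∑ k ∈ (Finset.range (Fintype.card Z + 1)).filter p, (Fintype.card Z).choose k := by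
  have hmaps : ∀ h ∈ (Finset.univ.filter (fun h : Z → Bool =>
      p ((Finset.univ.filter (fun z => h z = false)).card))),
      (Finset.univ.filter (fun z => h z = false)).card ∈
        (Finset.range (Fintype.card Z + 1)).filter p := by
    intro h hh
    simp only [mem_filter, mem_univ, true_and] at hh ⊢
    exact ⟨Finset.mem_range.mpr (Nat.lt_succ_of_le ((Finset.card_filter_le _ _).trans_eq Finset.card_univ)),
      hh⟩
  rw [Finset.card_eq_sum_card_fiberwise hmaps]
  apply Finset.sum_le_sum
  intro k _
  refine le_trans (Finset.card_le_card ?_) (card_cnt_eq k)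
  intro h hh
  simp only [mem_filter, mem_univ, true_and] at hh ⊢
  exact hh.2

lemma chernoff_sum (y : ℕ) (δ : ℝ) (hδ : 0 < δ) :
    ∑ k ∈ (Finset.range (y+1)).filter (fun k : ℕ => (k:ℝ) < (1/2 - δ) * y), ((y.choose k : ℝ))
      ≤ 2^y * Real.exp (-(2*δ^2)*y) := by
  set t : ℝ := 4*δ with ht
  have ht0 : 0 < t := by positivity
  set m : ℝ := (1/2 - δ) * y with hm
  have step1 : ∑ k ∈ (Finset.range (y+1)).filter (fun k : ℕ => (k:ℝ) < m), ((y.choose k : ℝ))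
      ≤ ∑ k ∈ Finset.range (y+1), (y.choose k : ℝ) * Real.exp (t * (m - k)) := by
    refine le_trans (Finset.sum_le_sum ?_) (Finset.sum_le_sum_of_subset_of_nonneg
      (Finset.filter_subset _ _) ?_)
    · intro k hk
      simp only [mem_filter] at hk
      have hmk : (0:ℝ) ≤ m - k := le_of_lt (by linarith [hk.2])
      have h1 : (1:ℝ) ≤ Real.exp (t * (m - k)) :=
        Real.one_le_exp (mul_nonneg ht0.le hmk)
      nlinarith [show (0:ℝ) ≤ ((y.choose k : ℕ) : ℝ) from Nat.cast_nonneg _]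
    · intro k _ _
      positivity
  have step2 : ∑ k ∈ Finset.range (y+1), (y.choose k : ℝ) * Real.exp (t * (m - k))
      = Real.exp (t * m) * (Real.exp (-t) + 1)^y := by
    rw [add_pow, Finset.mul_sum]
    apply Finset.sum_congr rfl
    intro k hk
    rw [one_pow, mul_one, ← Real.exp_nat_mul]
    rw [show t * (m - (k:ℝ)) = t * m + (k:ℝ) * (-t) by ring, Real.exp_add]
    ring
  have step3 : Real.exp (-t) + 1 ≤ 2 * Real.exp (t^2/8 - t/2) := by
    have hc : Real.cosh (t/2) ≤ Real.exp ((t/2)^2/2) := Real.cosh_le_exp_half_sq (t/2)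
    have he : Real.exp (-t) + 1 = 2 * Real.exp (-t/2) * Real.cosh (t/2) := by
      rw [Real.cosh_eq]
      have : 2 * Real.exp (-t/2) * ((Real.exp (t/2) + Real.exp (-(t/2)))/2)
          = Real.exp (-t/2) * Real.exp (t/2) + Real.exp (-t/2) * Real.exp (-(t/2)) := by ring
      rw [this, ← Real.exp_add, ← Real.exp_add, show -t/2 + t/2 = 0 by ring,
        show -t/2 + -(t/2) = -t by ring, Real.exp_zero]
      ring
    rw [he]
    calc 2 * Real.exp (-t/2) * Real.cosh (t/2)
        ≤ 2 * Real.exp (-t/2) * Real.exp ((t/2)^2/2) := by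
          have := Real.exp_pos (-t/2); nlinarith
      _ = 2 * Real.exp (t^2/8 - t/2) := by
          rw [mul_assoc, ← Real.exp_add]; ring_nf
  have step4 : Real.exp (t * m) * (Real.exp (-t) + 1)^y
      ≤ Real.exp (t * m) * (2 * Real.exp (t^2/8 - t/2))^y := by
    have h0 : (0:ℝ) ≤ Real.exp (-t) + 1 := by positivity
    have := pow_le_pow_left₀ h0 step3 y
    nlinarith [Real.exp_pos (t*m), pow_nonneg h0 y]
  have step5 : Real.exp (t * m) * (2 * Real.exp (t^2/8 - t/2))^y
      = 2^y * Real.exp (-(2*δ^2)*y) := by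
    rw [mul_pow, ← Real.exp_nat_mul]
    rw [show (-(2*δ^2)*(y:ℝ)) = t * m + (y:ℝ) * (t^2/8 - t/2) by rw [hm, ht]; ring,
      Real.exp_add]
    ring
  calc _ ≤ _ := step1
    _ = _ := step2
    _ ≤ _ := step4
    _ = _ := step5

lemma gnp_apply_le (n : ℕ) (A : Set (SimpleGraph (Fin n))) :
    gnp n (1/2) A ≤ ENNReal.ofReal
      (((Finset.univ.filter (fun G => G ∈ A)).card : ℝ) * (1/2 : ℝ) ^ n.choose 2) := by
  have hmeas : MeasurableSet A := MeasurableSpace.measurableSet_top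
  rw [gnp, MeasureTheory.Measure.finset_sum_apply]
  have hle : ∀ G : SimpleGraph (Fin n),
      ((ENNReal.ofReal ((1/2:ℝ) ^ edgeCount G * (1 - 1/2) ^ (n.choose 2 - edgeCount G))) •
        MeasureTheory.Measure.dirac G) A
      ≤ Set.indicator A (fun _ => ENNReal.ofReal ((1/2:ℝ) ^ n.choose 2)) G := by
    intro G
    rw [MeasureTheory.Measure.smul_apply, MeasureTheory.Measure.dirac_apply' _ hmeas]
    by_cases hG : G ∈ A
    · rw [Set.indicator_of_mem hG, Set.indicator_of_mem hG]
      simp only [Pi.one_apply, smul_eq_mul, mul_one]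
      apply ENNReal.ofReal_le_ofReal
      have h1 : ((1:ℝ)/2) ^ edgeCount G * (1 - 1/2) ^ (n.choose 2 - edgeCount G)
          = (1/2:ℝ) ^ (edgeCount G + (n.choose 2 - edgeCount G)) := by
        rw [pow_add]; norm_num
      rw [h1]
      apply pow_le_pow_of_le_one (by norm_num) (by norm_num)
      omega
    · rw [Set.indicator_of_notMem hG, Set.indicator_of_notMem hG]
      simp
  calc ∑ G : SimpleGraph (Fin n), ((ENNReal.ofReal ((1/2:ℝ) ^ edgeCount G *
          (1 - 1/2) ^ (n.choose 2 - edgeCount G))) • MeasureTheory.Measure.dirac G) A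
      ≤ ∑ G : SimpleGraph (Fin n),
          Set.indicator A (fun _ => ENNReal.ofReal ((1/2:ℝ) ^ n.choose 2)) G :=
        Finset.sum_le_sum (fun G _ => hle G)
    _ = ∑ G ∈ Finset.univ.filter (fun G => G ∈ A), ENNReal.ofReal ((1/2:ℝ) ^ n.choose 2) := by
        rw [Finset.sum_indicator_eq_sum_filter]
    _ = ((Finset.univ.filter (fun G => G ∈ A)).card : ℕ) •
          ENNReal.ofReal ((1/2:ℝ) ^ n.choose 2) := by
        rw [Finset.sum_const]
    _ = ENNReal.ofReal (((Finset.univ.filter (fun G => G ∈ A)).card : ℝ) *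
          (1/2 : ℝ) ^ n.choose 2) := by
        rw [nsmul_eq_mul, ENNReal.ofReal_mul (by positivity)]
        congr 1
        simp [ENNReal.ofReal_natCast]

lemma card_S_bound (n : ℕ) (Y : Finset (Fin n)) (a b : ℝ) (S : Finset (Fin n))
    (hSY : ∀ v ∈ S, v ∉ Y) :
    (Finset.univ.filter (fun G : SimpleGraph (Fin n) => ∀ v ∈ S,
        a < ((nonNbrs G v Y).card : ℝ) ∧ ((nonNbrs G v Y).card : ℝ) < b)).card
      = (Nat.card {h : {x // x ∈ Y} → Bool //
          a < ((Finset.univ.filter (fun u => h u = false)).card : ℝ) ∧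
          ((Finset.univ.filter (fun u => h u = false)).card : ℝ) < b}) ^ S.card
        * 2 ^ (n.choose 2 - S.card * Y.card)
      ∧ S.card * Y.card ≤ n.choose 2 := by
  have hne : ∀ (v : {x // x ∈ S}) (u : {x // x ∈ Y}),
      ¬ (s((v : Fin n), (u : Fin n)) : Sym2 (Fin n)).IsDiag := by
    intro v u
    simp only [Sym2.isDiag_iff_proj_eq]
    intro h
    exact hSY v v.2 (h ▸ u.2)
  set ι : {x // x ∈ S} × {x // x ∈ Y} ↪ {e : Sym2 (Fin n) // ¬ e.IsDiag} :=
    ⟨fun p => ⟨s((p.1 : Fin n), (p.2 : Fin n)), hne p.1 p.2⟩, by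
      rintro ⟨⟨v, hv⟩, ⟨u, hu⟩⟩ ⟨⟨v', hv'⟩, ⟨u', hu'⟩⟩ h
      simp only [Subtype.mk.injEq, Sym2.eq_iff] at h
      rcases h with ⟨hv, hu⟩ | ⟨hv, hu⟩
      · simp_all
      · subst hv hu
        exact absurd hu' (hSY v hv)⟩ with hι
  set R : ({x // x ∈ Y} → Bool) → Prop := fun h =>
    a < ((Finset.univ.filter (fun u => h u = false)).card : ℝ) ∧
    ((Finset.univ.filter (fun u => h u = false)).card : ℝ) < b with hR
  have hcardI : Fintype.card {e : Sym2 (Fin n) // ¬ e.IsDiag} = n.choose 2 := by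
    rw [Sym2.card_subtype_not_diag, Fintype.card_fin]
  have hcardκ : Fintype.card ({x // x ∈ S} × {x // x ∈ Y}) = S.card * Y.card := by
    rw [Fintype.card_prod, Fintype.card_coe, Fintype.card_coe]
  have hle : S.card * Y.card ≤ n.choose 2 := by
    rw [← hcardI, ← hcardκ]
    exact Fintype.card_le_of_injective ι ι.injective
  refine ⟨?_, hle⟩
  have hcnt : ∀ (G : SimpleGraph (Fin n)) (v : {x // x ∈ S}),
      ((nonNbrs G (v : Fin n) Y).card : ℕ)
        = (Finset.univ.filter (fun u : {x // x ∈ Y} =>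
            (graphEquiv n G) (ι (v, u)) = false)).card := by
    intro G v
    have h1 : nonNbrs G (v : Fin n) Y = Y.filter (fun u => ¬ G.Adj v u) := by
      rw [nonNbrs]
      apply Finset.filter_congr
      intro u hu
      have : u ≠ (v : Fin n) := fun h => hSY v v.2 (h ▸ hu)
      simp [this]
    calc (nonNbrs G (v : Fin n) Y).card
        = (Y.filter (fun u => ¬ G.Adj (v : Fin n) u)).card := by rw [h1]
      _ = (Finset.univ.filter (fun u : {x // x ∈ Y} =>
            ¬ G.Adj (v : Fin n) (u : Fin n))).card :=
          (card_filter_coe' Y (fun u => ¬ G.Adj (v : Fin n) u)).symm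
      _ = (Finset.univ.filter (fun u : {x // x ∈ Y} =>
            (graphEquiv n G) (ι (v, u)) = false)).card := by
          congr 1
          apply Finset.filter_congr
          intro u _
          simp only [hι, graphEquiv, Function.Embedding.coeFn_mk, Equiv.coe_fn_mk,
            decide_eq_false_iff_not, SimpleGraph.mem_edgeSet]
          exact Iff.rfl
  have hiff : ∀ G : SimpleGraph (Fin n),
      (∀ v ∈ S, a < ((nonNbrs G v Y).card : ℝ) ∧ ((nonNbrs G v Y).card : ℝ) < b)
        ↔ (∀ v : {x // x ∈ S}, R (fun u => (graphEquiv n G) (ι (v, u)))) := by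
    intro G
    constructor
    · intro h v
      have := h v v.2
      rw [hR]
      simp only [← hcnt G v]
      exact this
    · intro h v hv
      have := h ⟨v, hv⟩
      rw [hR] at this
      simpa only [← hcnt G ⟨v, hv⟩] using this
  calc (Finset.univ.filter (fun G : SimpleGraph (Fin n) => ∀ v ∈ S,
        a < ((nonNbrs G v Y).card : ℝ) ∧ ((nonNbrs G v Y).card : ℝ) < b)).card
      = Nat.card {G : SimpleGraph (Fin n) // ∀ v ∈ S,
          a < ((nonNbrs G v Y).card : ℝ) ∧ ((nonNbrs G v Y).card : ℝ) < b} := by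
        rw [Nat.card_eq_fintype_card, Fintype.card_subtype]
    _ = Nat.card {f : {e : Sym2 (Fin n) // ¬ e.IsDiag} → Bool //
          ∀ v : {x // x ∈ S}, R (fun u => f (ι (v, u)))} := by
        exact Nat.card_congr ((graphEquiv n).subtypeEquiv hiff)
    _ = Nat.card {g : {x // x ∈ S} × {x // x ∈ Y} → Bool //
          ∀ v : {x // x ∈ S}, R (fun u => g (v, u))}
        * 2 ^ (Fintype.card {e : Sym2 (Fin n) // ¬ e.IsDiag}
            - Fintype.card ({x // x ∈ S} × {x // x ∈ Y})) := by
        exact card_restrict' ι (fun g => ∀ v : {x // x ∈ S}, R (fun u => g (v, u)))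
    _ = (Nat.card {h : {x // x ∈ Y} → Bool // R h}) ^ S.card
        * 2 ^ (n.choose 2 - S.card * Y.card) := by
        rw [hcardI, hcardκ]
        congr 1
        have e1 : {g : {x // x ∈ S} × {x // x ∈ Y} → Bool //
            ∀ v : {x // x ∈ S}, R (fun u => g (v, u))}
            ≃ {F : {x // x ∈ S} → ({x // x ∈ Y} → Bool) // ∀ v, R (F v)} :=
          (Equiv.curry _ _ _).subtypeEquiv (fun g => Iff.rfl)
        have e2 : {F : {x // x ∈ S} → ({x // x ∈ Y} → Bool) // ∀ v, R (F v)}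
            ≃ ∀ _v : {x // x ∈ S}, {h : {x // x ∈ Y} → Bool // R h} :=
          Equiv.subtypePiEquivPi
        rw [Nat.card_congr (e1.trans e2), Nat.card_pi, Finset.prod_const,
          Finset.card_univ, Fintype.card_coe]

end AuxLemmas

set_option maxHeartbeats 1000000 in
/-- for sufficiently small `ε > 0`, `α ∈ (0,1/2)` with
`|α ln α + (1−α) ln(1−α)| < ε`, `t₁ = ⌊(ln n)²⌋`, `n` large and any fixed `Y` with
`|Y| = y ≥ (ln n)^{2+3ε}√n`, the probability that more than `t₁` vertices `v ∉ Y`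
satisfy `α y < |N₀(v,Y)| < (1/2 − (ε/5)·(ln ln n)/(ln n))·y` is at most
`e^{−(ε²/50)·y·(ln ln n)²}`. -/
theorem statement9 :
    ∃ ε₀ : ℝ, 0 < ε₀ ∧ ∀ ε : ℝ, 0 < ε → ε < ε₀ →
      ∀ α : ℝ, α ∈ Set.Ioo (0:ℝ) (1/2) →
        |α * Real.log α + (1 - α) * Real.log (1 - α)| < ε →
      ∃ n₀ : ℕ, ∀ n : ℕ, n₀ ≤ n → ∀ Y : Finset (Fin n),
        Real.log n ^ ((2:ℝ) + 3*ε) * Real.sqrt n ≤ (Y.card : ℝ) →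
        gnp n (1/2) {G : SimpleGraph (Fin n) |
          ⌊Real.log n ^ 2⌋₊ <
            (Finset.univ.filter (fun v : Fin n =>
              v ∉ Y ∧ α * Y.card < ((nonNbrs G v Y).card : ℝ) ∧
              ((nonNbrs G v Y).card : ℝ)
                < (1/2 - (ε/5) * (Real.log (Real.log n) / Real.log n)) * Y.card)).card}
        ≤ ENNReal.ofReal
            (Real.exp (-(ε^2/50) * Y.card * Real.log (Real.log n) ^ 2)) := by
  classical
  refine ⟨1, one_pos, ?_⟩
  intro ε hε hε1 α hα _hent
  -- choose n₀ via eventual facts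
  have hnat : Tendsto (fun n : ℕ => (n:ℝ)) atTop atTop := tendsto_natCast_atTop_atTop
  have hlogt : Tendsto (fun n : ℕ => Real.log n) atTop atTop :=
    Real.tendsto_log_atTop.comp hnat
  have hloglogt : Tendsto (fun n : ℕ => Real.log (Real.log n)) atTop atTop :=
    Real.tendsto_log_atTop.comp hlogt
  have hev1 : ∀ᶠ n : ℕ in atTop, 1 ≤ Real.log n := hlogt.eventually_ge_atTop 1
  have hev2 : ∀ᶠ n : ℕ in atTop, 1 ≤ Real.log (Real.log n) := hloglogt.eventually_ge_atTop 1
  have hev3 : ∀ᶠ n : ℕ in atTop, 34 * Real.log n ≤ ε^2 * Real.sqrt n := by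
    have hlo := isLittleO_log_rpow_atTop (show (0:ℝ) < 1/2 by norm_num)
    have h2 := (Asymptotics.isLittleO_iff.mp hlo) (show (0:ℝ) < ε^2/34 by positivity)
    have h3 : ∀ᶠ x : ℝ in atTop, 34 * Real.log x ≤ ε^2 * Real.sqrt x := by
      filter_upwards [h2, eventually_ge_atTop (1:ℝ)] with x hx hx1
      have hx0 : (0:ℝ) ≤ x := by linarith
      rw [Real.norm_eq_abs, Real.norm_eq_abs, abs_of_nonneg (Real.log_nonneg hx1),
        abs_of_nonneg (Real.rpow_nonneg hx0 _)] at hx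
      rw [Real.sqrt_eq_rpow]
      linarith
    exact hnat.eventually h3
  obtain ⟨n₀, hn₀⟩ := eventually_atTop.mp ((hev1.and hev2).and hev3)
  refine ⟨n₀, ?_⟩
  intro n hn Y hY
  obtain ⟨⟨hℓ1, hL1⟩, h34⟩ := hn₀ n hn
  set ℓ : ℝ := Real.log n with hℓdef
  set L : ℝ := Real.log ℓ with hLdef
  set δ : ℝ := ε/5 * (L / ℓ) with hδdef
  set y : ℕ := Y.card with hydef
  set T : ℕ := ⌊ℓ^2⌋₊ + 1 with hTdef
  set E : ℕ := n.choose 2 with hEdef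
  have hℓ0 : (0:ℝ) < ℓ := by linarith
  have hL0 : (0:ℝ) < L := by linarith
  have hδ0 : (0:ℝ) < δ := by
    rw [hδdef]; exact mul_pos (by linarith) (div_pos hL0 hℓ0)
  have hnne : n ≠ 0 := by
    rintro rfl
    rw [hℓdef] at hℓ1
    simp [Real.log_zero] at hℓ1
    linarith
  have hn0 : (0:ℝ) < n := by exact_mod_cast Nat.pos_of_ne_zero hnne
  have hs0 : (0:ℝ) < Real.sqrt n := Real.sqrt_pos.mpr hn0
  have hy2 : ℓ^2 * Real.sqrt n ≤ (y:ℝ) := by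
    have h1 : ℓ^(2:ℝ) ≤ ℓ^((2:ℝ)+3*ε) :=
      Real.rpow_le_rpow_of_exponent_le hℓ1 (by linarith)
    have h2 : ℓ^(2:ℝ) = ℓ^(2:ℕ) := Real.rpow_two ℓ
    calc ℓ^2 * Real.sqrt n = ℓ^(2:ℝ) * Real.sqrt n := by rw [h2]
      _ ≤ ℓ^((2:ℝ)+3*ε) * Real.sqrt n := mul_le_mul_of_nonneg_right h1 hs0.le
      _ ≤ (y:ℝ) := hY
  have hy0 : (0:ℝ) < (y:ℝ) :=
    lt_of_lt_of_le (mul_pos (pow_pos hℓ0 2) hs0) hy2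
  -- measure step
  refine le_trans (gnp_apply_le n _) ?_
  apply ENNReal.ofReal_le_ofReal
  -- counting step
  set W : Finset (Fin n) := Finset.univ.filter (fun v : Fin n => v ∉ Y) with hWdef
  set 𝒮 : Finset (Finset (Fin n)) := W.powersetCard T with h𝒮def
  have step1 : (Finset.univ.filter (fun G : SimpleGraph (Fin n) => G ∈
        {G : SimpleGraph (Fin n) | ⌊ℓ^2⌋₊ <
          (Finset.univ.filter (fun v : Fin n =>
            v ∉ Y ∧ α * (y:ℝ) < ((nonNbrs G v Y).card : ℝ) ∧
            ((nonNbrs G v Y).card : ℝ) < (1/2 - δ) * (y:ℝ))).card})).card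
      ≤ ∑ S ∈ 𝒮, (Finset.univ.filter (fun G : SimpleGraph (Fin n) => ∀ v ∈ S,
          α * (y:ℝ) < ((nonNbrs G v Y).card : ℝ) ∧
          ((nonNbrs G v Y).card : ℝ) < (1/2 - δ) * (y:ℝ))).card := by
    refine le_trans (Finset.card_le_card ?_) Finset.card_biUnion_le
    intro G hG
    simp only [Finset.mem_filter, Finset.mem_univ, true_and, Set.mem_setOf_eq] at hG
    have hTB : T ≤ (Finset.univ.filter (fun v : Fin n =>
        v ∉ Y ∧ α * (y:ℝ) < ((nonNbrs G v Y).card : ℝ) ∧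
        ((nonNbrs G v Y).card : ℝ) < (1/2 - δ) * (y:ℝ))).card := hG
    obtain ⟨S, hSB, hScard⟩ := Finset.exists_subset_card_eq hTB
    refine Finset.mem_biUnion.mpr ⟨S, ?_, ?_⟩
    · rw [h𝒮def, Finset.mem_powersetCard]
      refine ⟨?_, hScard⟩
      intro v hv
      have := hSB hv
      simp only [Finset.mem_filter, Finset.mem_univ, true_and] at this
      rw [hWdef]
      simp only [Finset.mem_filter, Finset.mem_univ, true_and]
      exact this.1
    · simp only [Finset.mem_filter, Finset.mem_univ, true_and]
      intro v hv
      have := hSB hv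
      simp only [Finset.mem_filter, Finset.mem_univ, true_and] at this
      exact this.2
  have step2 : ∀ S ∈ 𝒮, ((Finset.univ.filter (fun G : SimpleGraph (Fin n) => ∀ v ∈ S,
        α * (y:ℝ) < ((nonNbrs G v Y).card : ℝ) ∧
        ((nonNbrs G v Y).card : ℝ) < (1/2 - δ) * (y:ℝ))).card : ℝ) * (1/2:ℝ)^E
      ≤ Real.exp (-(2*δ^2)*(y:ℝ)) ^ T := by
    intro S hS
    rw [h𝒮def, Finset.mem_powersetCard] at hS
    obtain ⟨hSW, hScard⟩ := hS
    have hSY : ∀ v ∈ S, v ∉ Y := by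
      intro v hv
      have := hSW hv
      rw [hWdef] at this
      simp only [Finset.mem_filter, Finset.mem_univ, true_and] at this
      exact this
    obtain ⟨hcardeq, hTyE⟩ :=
      card_S_bound n Y (α * (y:ℝ)) ((1/2 - δ) * (y:ℝ)) S hSY
    rw [hScard] at hcardeq hTyE
    set c : ℕ := Nat.card {h : {x // x ∈ Y} → Bool //
        α * (y:ℝ) < ((Finset.univ.filter (fun u => h u = false)).card : ℝ) ∧
        ((Finset.univ.filter (fun u => h u = false)).card : ℝ) < (1/2 - δ) * (y:ℝ)} with hcdef
    have hc : (c:ℝ) ≤ 2^y * Real.exp (-(2*δ^2)*(y:ℝ)) := by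
      have h1 : c ≤ ∑ k ∈ (Finset.range (y+1)).filter
          (fun k : ℕ => α * (y:ℝ) < (k:ℝ) ∧ (k:ℝ) < (1/2 - δ) * (y:ℝ)), y.choose k := by
        have hb := card_bool_count (Z := {x // x ∈ Y})
          (fun k : ℕ => α * (y:ℝ) < (k:ℝ) ∧ (k:ℝ) < (1/2 - δ) * (y:ℝ))
        rw [Fintype.card_coe] at hb
        refine le_trans (le_of_eq ?_) hb
        rw [hcdef, Nat.card_eq_fintype_card, Fintype.card_subtype]
        congr
        funext a b
        exact Subsingleton.elim _ _
      calc (c:ℝ) ≤ (∑ k ∈ (Finset.range (y+1)).filter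
            (fun k : ℕ => α * (y:ℝ) < (k:ℝ) ∧ (k:ℝ) < (1/2 - δ) * (y:ℝ)),
            y.choose k : ℕ) := by exact_mod_cast h1
        _ = ∑ k ∈ (Finset.range (y+1)).filter
            (fun k : ℕ => α * (y:ℝ) < (k:ℝ) ∧ (k:ℝ) < (1/2 - δ) * (y:ℝ)),
            ((y.choose k : ℕ) : ℝ) := by push_cast; rfl
        _ ≤ ∑ k ∈ (Finset.range (y+1)).filter
            (fun k : ℕ => (k:ℝ) < (1/2 - δ) * (y:ℝ)), ((y.choose k : ℕ) : ℝ) := by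
            refine Finset.sum_le_sum_of_subset_of_nonneg ?_ (fun k _ _ => by positivity)
            intro k hk
            simp only [Finset.mem_filter] at hk ⊢
            exact ⟨hk.1, hk.2.2⟩
        _ ≤ 2^y * Real.exp (-(2*δ^2)*(y:ℝ)) := chernoff_sum y δ hδ0
    have hcast : ((Finset.univ.filter (fun G : SimpleGraph (Fin n) => ∀ v ∈ S,
        α * (y:ℝ) < ((nonNbrs G v Y).card : ℝ) ∧
        ((nonNbrs G v Y).card : ℝ) < (1/2 - δ) * (y:ℝ))).card : ℝ)
        = (c:ℝ)^T * 2^(E - T*y) := by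
      rw [hcardeq]; push_cast; ring
    rw [hcast]
    have halg : ((2:ℝ))^(E - T*y) * (1/2:ℝ)^E = ((1/2:ℝ)^y)^T := by
      have h1 : (2:ℝ)^(E - T*y) * 2^(T*y) = 2^E := by
        have he : E - T*y + T*y = E := Nat.sub_add_cancel hTyE
        rw [← pow_add, he]
      have h2 : ((1/2:ℝ))^E = ((2:ℝ)^E)⁻¹ := by rw [one_div, inv_pow]
      have h3 : ((1/2:ℝ)^y)^T = ((2:ℝ)^(T*y))⁻¹ := by
        rw [one_div, inv_pow, inv_pow, ← pow_mul, mul_comm y T]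
      rw [h2, h3]
      have h4 : ((2:ℝ)^E) ≠ 0 := by positivity
      have h5 : ((2:ℝ)^(T*y)) ≠ 0 := by positivity
      field_simp
      linarith [h1]
    calc (c:ℝ)^T * 2^(E - T*y) * (1/2:ℝ)^E
        = (c:ℝ)^T * ((1/2:ℝ)^y)^T := by rw [mul_assoc, halg]
      _ = ((c:ℝ) * (1/2:ℝ)^y)^T := by rw [mul_pow]
      _ ≤ (Real.exp (-(2*δ^2)*(y:ℝ)))^T := by
          apply pow_le_pow_left₀ (by positivity)
          have h6 : (2:ℝ)^y * (1/2:ℝ)^y = 1 := by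
            rw [← mul_pow]; norm_num
          calc (c:ℝ) * (1/2:ℝ)^y
              ≤ (2^y * Real.exp (-(2*δ^2)*(y:ℝ))) * (1/2:ℝ)^y :=
                mul_le_mul_of_nonneg_right hc (by positivity)
            _ = Real.exp (-(2*δ^2)*(y:ℝ)) := by
                rw [mul_comm ((2:ℝ)^y) _, mul_assoc, h6, mul_one]
  have h𝒮card : ((𝒮.card : ℕ) : ℝ) ≤ (n:ℝ)^T := by
    have h1 : 𝒮.card = W.card.choose T := by rw [h𝒮def, Finset.card_powersetCard]
    have h2 : W.card.choose T ≤ W.card ^ T := Nat.choose_le_pow _ _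
    have h3 : W.card ≤ n := by
      calc W.card ≤ (Finset.univ : Finset (Fin n)).card := Finset.card_filter_le _ _
        _ = n := by rw [Finset.card_univ, Fintype.card_fin]
    have h4 : 𝒮.card ≤ n ^ T := by
      rw [h1]
      exact le_trans h2 (Nat.pow_le_pow_left h3 T)
    exact_mod_cast h4
  have hfinal : (n:ℝ)^T * Real.exp (-(2*δ^2)*(y:ℝ))^T
      ≤ Real.exp (-(ε^2/50) * (y:ℝ) * L^2) := by
    have hn_exp : (n:ℝ) = Real.exp ℓ := (Real.exp_log hn0).symm
    rw [hn_exp, ← Real.exp_nat_mul, ← Real.exp_nat_mul, ← Real.exp_add]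
    apply Real.exp_le_exp.mpr
    have hT1 : ℓ^2 < (T:ℝ) := by
      rw [hTdef]
      push_cast
      exact Nat.lt_floor_add_one _
    have hT2 : (T:ℝ) ≤ ℓ^2 + 1 := by
      rw [hTdef]
      push_cast
      have := Nat.floor_le (show (0:ℝ) ≤ ℓ^2 by positivity)
      linarith
    have hδy : 2*δ^2*(y:ℝ) = (2/25)*ε^2*L^2*(y:ℝ)/ℓ^2 := by
      rw [hδdef]; field_simp; ring
    have hA : (2/25)*ε^2*(y:ℝ)*L^2 ≤ (T:ℝ)*(2*δ^2*(y:ℝ)) := by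
      have h0 : (0:ℝ) ≤ 2*δ^2*(y:ℝ) := mul_nonneg (mul_nonneg (by norm_num) (sq_nonneg δ)) hy0.le
      calc (2/25)*ε^2*(y:ℝ)*L^2 = ℓ^2 * (2*δ^2*(y:ℝ)) := by
            rw [hδy]; field_simp
        _ ≤ (T:ℝ) * (2*δ^2*(y:ℝ)) := mul_le_mul_of_nonneg_right hT1.le h0
    have hB : (T:ℝ)*ℓ ≤ 2*ℓ^3 := by nlinarith
    have hC : 34*ℓ^3 ≤ ε^2*(y:ℝ)*L^2 := by
      have hL2 : 1 ≤ L^2 := by nlinarith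
      have h2 : ℓ^2*(34*ℓ) ≤ ℓ^2*(ε^2*Real.sqrt n) :=
        mul_le_mul_of_nonneg_left h34 (by positivity)
      have h5 : ε^2*(ℓ^2*Real.sqrt n) ≤ ε^2*(y:ℝ) :=
        mul_le_mul_of_nonneg_left hy2 (sq_nonneg ε)
      nlinarith [mul_le_mul_of_nonneg_left hL2 (mul_nonneg (sq_nonneg ε) hy0.le)]
    nlinarith [hA, hB, hC]
  calc _ ≤ (∑ S ∈ 𝒮, ((Finset.univ.filter (fun G : SimpleGraph (Fin n) => ∀ v ∈ S,
          α * (y:ℝ) < ((nonNbrs G v Y).card : ℝ) ∧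
          ((nonNbrs G v Y).card : ℝ) < (1/2 - δ) * (y:ℝ))).card : ℕ) : ℝ) * (1/2:ℝ)^E := by
        apply mul_le_mul_of_nonneg_right _ (by positivity)
        exact_mod_cast step1
    _ = ∑ S ∈ 𝒮, ((Finset.univ.filter (fun G : SimpleGraph (Fin n) => ∀ v ∈ S,
          α * (y:ℝ) < ((nonNbrs G v Y).card : ℝ) ∧
          ((nonNbrs G v Y).card : ℝ) < (1/2 - δ) * (y:ℝ))).card : ℝ) * (1/2:ℝ)^E := by
        push_cast
        rw [Finset.sum_mul]
    _ ≤ ∑ _S ∈ 𝒮, Real.exp (-(2*δ^2)*(y:ℝ)) ^ T := Finset.sum_le_sum step2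
    _ = (𝒮.card : ℝ) * Real.exp (-(2*δ^2)*(y:ℝ)) ^ T := by
        rw [Finset.sum_const, nsmul_eq_mul]
    _ ≤ (n:ℝ)^T * Real.exp (-(2*δ^2)*(y:ℝ)) ^ T :=
        mul_le_mul_of_nonneg_right h𝒮card (by positivity)
    _ ≤ Real.exp (-(ε^2/50) * (y:ℝ) * L^2) := hfinal
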